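/- For all x, y ∈ ℚ_p the following two identities hold: (i) Σ_{(b,c,d) ∈ Λ₁} σ(x+p^{−1}c)·σ(y+p^{−1}d) = (p−1)·σ(x)·σ(y) + σ(px)·σ(py) − σ(px)·σ(y); (ii) Σ_{(b,c,d) ∈ Λ₂} σ(x+p^{−1}c)·σ(y+p^{−1}d) = (p−1)·σ(px)·σ(py) + σ(px)·σ(y) − p·σ(x)·σ(y). -/

import Mathlib

noncomputable section
open scoped Classical

/-- The characteristic function σ of ℤ_p inside ℚ_p: `σ(x) = 1` if `x ∈ ℤ_p`, else 0. -/
def pind {p : ℕ} [Fact p.Prime] (x : ℚ_[p]) : ℝ := if ‖x‖ ≤ 1 then 1 else 0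

/-- `Λ_i`: the set of triples (b,c,d) with b,c,d ∈ {0,…,p−1} such that the symmetric matrix
`(b,c;c,d)` over `𝔽_p = ℤ/pℤ` has rank i. -/
def Lam (p : ℕ) [Fact p.Prime] (i : ℕ) : Finset (ℕ × ℕ × ℕ) :=
  (Finset.range p ×ˢ Finset.range p ×ˢ Finset.range p).filter
    fun t => Matrix.rank
      !![((t.1 : ℕ) : ZMod p), ((t.2.1 : ℕ) : ZMod p);
         ((t.2.1 : ℕ) : ZMod p), ((t.2.2 : ℕ) : ZMod p)] = i

section RankAux

open Matrix

set_option linter.unusedSectionVars false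

variable {K : Type*} [Field K]

lemma span_le_singleton_aux {v w u : Fin 2 → K} (hv : ∃ s : K, v = s • u) (hw : ∃ t : K, w = t • u)
    {A : Matrix (Fin 2) (Fin 2) K} (h0 : Aᵀ 0 = v) (h1 : Aᵀ 1 = w) :
    A.rank ≤ 1 := by
  rw [Matrix.rank_eq_finrank_span_cols]
  have hle : Submodule.span K (Set.range Aᵀ) ≤ Submodule.span K ({u} : Set (Fin 2 → K)) := by
    rw [Submodule.span_le]
    rintro z ⟨i, rfl⟩
    have : Aᵀ i = v ∨ Aᵀ i = w := by
      rcases Fin.exists_fin_two.mp ⟨i, rfl⟩ with h | h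
      · exact Or.inl (h ▸ h0)
      · exact Or.inr (h ▸ h1)
    rcases this with h | h <;> rw [h]
    · obtain ⟨s, rfl⟩ := hv
      exact Submodule.smul_mem _ _ (Submodule.subset_span rfl)
    · obtain ⟨t, rfl⟩ := hw
      exact Submodule.smul_mem _ _ (Submodule.subset_span rfl)
  refine le_trans (Submodule.finrank_mono hle) ?_
  by_cases hu : u = 0
  · rw [hu, Submodule.span_zero_singleton]
    simp
  · exact le_of_eq (finrank_span_singleton hu)

lemma rank2_of_det_ne (a b c d : K) (h : a * d - b * c ≠ 0) :
    (!![a, b; c, d]).rank = 2 := by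
  have hu : IsUnit (!![a, b; c, d]) := by
    rw [Matrix.isUnit_iff_isUnit_det, Matrix.det_fin_two_of, isUnit_iff_ne_zero]
    exact h
  rw [Matrix.rank_of_isUnit _ hu, Fintype.card_fin]

lemma rank_le_one_of_det_eq (a b c d : K) (h : a * d - b * c = 0) :
    (!![a, b; c, d]).rank ≤ 1 := by
  have hdet : a * d = b * c := sub_eq_zero.mp h
  have hac : (!![a, b; c, d])ᵀ 0 = ![a, c] := by
    funext j; fin_cases j <;> simp
  have hbd : (!![a, b; c, d])ᵀ 1 = ![b, d] := by
    funext j; fin_cases j <;> simp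
  by_cases h0 : a = 0 ∧ c = 0
  · exact span_le_singleton_aux (u := ![b, d]) ⟨0, by rw [h0.1, h0.2]; funext j; fin_cases j <;> simp⟩
      ⟨1, by simp⟩ hac hbd
  · refine span_le_singleton_aux (u := ![a, c]) ⟨1, by simp⟩ ?_ hac hbd
    rcases not_and_or.mp h0 with ha | hc
    · refine ⟨b / a, ?_⟩
      funext j; fin_cases j
      · simp [div_mul_cancel₀ _ ha]
      · show d = b / a * c
        field_simp
        linear_combination hdet
    · refine ⟨d / c, ?_⟩
      funext j; fin_cases j
      · show b = d / c * a
        field_simp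
        linear_combination -hdet
      · simp [div_mul_cancel₀ _ hc]

lemma rank_ne_zero_of_ne (a b c d : K) (h : ¬(a = 0 ∧ b = 0 ∧ c = 0 ∧ d = 0)) :
    (!![a, b; c, d]).rank ≠ 0 := by
  intro h0
  rw [Matrix.rank_eq_finrank_span_cols] at h0
  have hb : Submodule.span K (Set.range (!![a, b; c, d])ᵀ) = ⊥ := Submodule.finrank_eq_zero.mp h0
  have hmem : ∀ i j, (!![a, b; c, d])ᵀ i j = 0 := by
    intro i j
    have : (!![a, b; c, d])ᵀ i ∈ (⊥ : Submodule K (Fin 2 → K)) := by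
      rw [← hb]; exact Submodule.subset_span ⟨i, rfl⟩
    rw [Submodule.mem_bot] at this
    exact congrFun this j
  exact h ⟨by simpa using hmem 0 0, by simpa using hmem 1 0, by simpa using hmem 0 1,
    by simpa using hmem 1 1⟩

lemma rank_fin_two_eq_one_iff (a b c d : K) :
    (!![a, b; c, d]).rank = 1 ↔ (a * d - b * c = 0 ∧ ¬(a = 0 ∧ b = 0 ∧ c = 0 ∧ d = 0)) := by
  constructor
  · intro h1
    constructor
    · by_contra hdet
      rw [rank2_of_det_ne a b c d hdet] at h1; omega
    · rintro ⟨rfl, rfl, rfl, rfl⟩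
      have hz : (!![(0:K), 0; 0, 0]) = 0 := by ext i j; fin_cases i <;> fin_cases j <;> simp
      rw [hz, Matrix.rank_zero] at h1; omega
  · rintro ⟨hdet, hz⟩
    have h1 := rank_le_one_of_det_eq a b c d hdet
    have h2 := rank_ne_zero_of_ne a b c d hz
    omega

lemma rank_fin_two_eq_two_iff (a b c d : K) :
    (!![a, b; c, d]).rank = 2 ↔ a * d - b * c ≠ 0 := by
  constructor
  · intro h2 hdet
    by_cases hz : a = 0 ∧ b = 0 ∧ c = 0 ∧ d = 0
    · obtain ⟨rfl, rfl, rfl, rfl⟩ := hz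
      have hz0 : (!![(0:K), 0; 0, 0]) = 0 := by ext i j; fin_cases i <;> fin_cases j <;> simp
      rw [hz0, Matrix.rank_zero] at h2; omega
    · rw [(rank_fin_two_eq_one_iff a b c d).mpr ⟨hdet, hz⟩] at h2; omega
  · exact rank2_of_det_ne a b c d

end RankAux

section PadicAux

variable {p : ℕ} [Fact p.Prime]

lemma p_cast_ne_zero : ((p : ℚ_[p]) : ℚ_[p]) ≠ 0 := by
  exact_mod_cast (Fact.out : p.Prime).ne_zero

lemma pind_term_eq (x : ℚ_[p]) (h : ‖(p : ℚ_[p]) * x‖ ≤ 1) (C : ZMod p) :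
    pind (x + (p : ℚ_[p])⁻¹ * ((C.val : ℕ) : ℚ_[p]))
      = if C = - PadicInt.toZMod (⟨(p : ℚ_[p]) * x, h⟩ : ℤ_[p]) then 1 else 0 := by
  haveI : NeZero p := ⟨(Fact.out : p.Prime).ne_zero⟩
  set z : ℤ_[p] := (⟨(p : ℚ_[p]) * x, h⟩ : ℤ_[p]) with hz
  set w : ℤ_[p] := z + ((C.val : ℕ) : ℤ_[p]) with hw
  have hpn : ‖(p : ℚ_[p])‖ = ((p : ℝ))⁻¹ := Padic.norm_p
  have hp0 : (p : ℚ_[p]) ≠ 0 := p_cast_ne_zero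
  have hrw : x + (p : ℚ_[p])⁻¹ * ((C.val : ℕ) : ℚ_[p])
      = (p : ℚ_[p])⁻¹ * ((p : ℚ_[p]) * x + ((C.val : ℕ) : ℚ_[p])) := by
    field_simp
  have hwq : ((w : ℚ_[p])) = (p : ℚ_[p]) * x + ((C.val : ℕ) : ℚ_[p]) := by
    rw [hw]
    push_cast
    ring
  have hnorm : ‖x + (p : ℚ_[p])⁻¹ * ((C.val : ℕ) : ℚ_[p])‖ = (p : ℝ) * ‖w‖ := by
    rw [hrw, norm_mul, norm_inv, hpn, inv_inv, PadicInt.norm_def, hwq]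
  have hple : (1 : ℝ) < (p : ℝ) := by
    exact_mod_cast (Fact.out : p.Prime).one_lt
  have hcond : ‖x + (p : ℚ_[p])⁻¹ * ((C.val : ℕ) : ℚ_[p])‖ ≤ 1 ↔ PadicInt.toZMod w = 0 := by
    rw [hnorm]
    have h1 : (p : ℝ) * ‖w‖ ≤ 1 ↔ ‖w‖ ≤ ((p : ℝ))⁻¹ := by
      rw [mul_comm, ← le_div_iff₀ (by linarith), one_div]
    have h2 : PadicInt.toZMod w = 0 ↔ (p : ℤ_[p]) ∣ w := by
      rw [← RingHom.mem_ker, PadicInt.ker_toZMod, PadicInt.maximalIdeal_eq_span_p,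
        Ideal.mem_span_singleton]
    rw [h1, h2]
    constructor
    · intro hle
      rw [← PadicInt.norm_lt_one_iff_dvd]
      calc ‖w‖ ≤ ((p : ℝ))⁻¹ := hle
        _ < 1 := by
          rw [inv_lt_one_iff₀]; right; exact hple
    · rintro ⟨u, hu⟩
      rw [hu, norm_mul, PadicInt.norm_p]
      calc ((p : ℝ))⁻¹ * ‖u‖ ≤ ((p : ℝ))⁻¹ * 1 :=
            mul_le_mul_of_nonneg_left (PadicInt.norm_le_one u) (by positivity)
        _ = ((p : ℝ))⁻¹ := mul_one _
  have htz : PadicInt.toZMod w = PadicInt.toZMod z + C := by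
    rw [hw, map_add, map_natCast, ZMod.natCast_rightInverse C]
  have hCiff : PadicInt.toZMod w = 0 ↔ C = - PadicInt.toZMod z := by
    rw [htz, add_comm, add_eq_zero_iff_eq_neg]
  rw [pind]
  exact if_congr (hcond.trans hCiff) rfl rfl

lemma sum_pind (x : ℚ_[p]) :
    ∑ C : ZMod p, pind (x + (p : ℚ_[p])⁻¹ * ((C.val : ℕ) : ℚ_[p]))
      = pind ((p : ℚ_[p]) * x) := by
  haveI : NeZero p := ⟨(Fact.out : p.Prime).ne_zero⟩
  have hpn : ‖(p : ℚ_[p])‖ = ((p : ℝ))⁻¹ := Padic.norm_p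
  have hple : (1 : ℝ) < (p : ℝ) := by exact_mod_cast (Fact.out : p.Prime).one_lt
  by_cases h : ‖(p : ℚ_[p]) * x‖ ≤ 1
  · simp_rw [pind_term_eq x h]
    rw [Finset.sum_ite_eq' Finset.univ _ (fun _ => (1 : ℝ))]
    rw [if_pos (Finset.mem_univ _), pind, if_pos h]
  · have hx : (p : ℝ) < ‖x‖ := by
      have := h
      rw [norm_mul, hpn] at this
      push_neg at this
      rw [inv_mul_eq_div, lt_div_iff₀ (by linarith)] at this
      linarith
    have hterm : ∀ C : ZMod p, pind (x + (p : ℚ_[p])⁻¹ * ((C.val : ℕ) : ℚ_[p])) = 0 := by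
      intro C
      have hC : ‖(p : ℚ_[p])⁻¹ * ((C.val : ℕ) : ℚ_[p])‖ ≤ (p : ℝ) := by
        rw [norm_mul, norm_inv, hpn, inv_inv]
        have : ‖((C.val : ℕ) : ℚ_[p])‖ ≤ 1 := by
          have := Padic.norm_int_le_one (p := p) (C.val : ℤ)
          push_cast at this
          exact this
        calc (p : ℝ) * ‖((C.val : ℕ) : ℚ_[p])‖ ≤ (p : ℝ) * 1 :=
              mul_le_mul_of_nonneg_left this (by positivity)
          _ = (p : ℝ) := mul_one _
      have hne : ‖x‖ ≠ ‖(p : ℚ_[p])⁻¹ * ((C.val : ℕ) : ℚ_[p])‖ := by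
        intro heq
        rw [← heq] at hC
        linarith
      have : ‖x + (p : ℚ_[p])⁻¹ * ((C.val : ℕ) : ℚ_[p])‖ = max ‖x‖ ‖(p : ℚ_[p])⁻¹ * ((C.val : ℕ) : ℚ_[p])‖ :=
        Padic.add_eq_max_of_ne hne
      rw [pind, if_neg]
      rw [this]
      push_neg
      calc (1 : ℝ) < (p : ℝ) := hple
        _ < ‖x‖ := hx
        _ ≤ max ‖x‖ _ := le_max_left _ _
    rw [Finset.sum_congr rfl (fun C _ => hterm C), Finset.sum_const, smul_zero, pind, if_neg h]

lemma pind_zero_term (x : ℚ_[p]) :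
    pind (x + (p : ℚ_[p])⁻¹ * (((0 : ZMod p).val : ℕ) : ℚ_[p])) = pind x := by
  haveI : NeZero p := ⟨(Fact.out : p.Prime).ne_zero⟩
  rw [ZMod.val_zero]
  norm_num

end PadicAux

section CountAux

variable {p : ℕ} [Fact p.Prime]

lemma card_rank_one (C D : ZMod p) :
    ((Finset.univ.filter fun B : ZMod p => (!![B, C; C, D]).rank = 1).card : ℝ)
      = if D = 0 then (if C = 0 then (p : ℝ) - 1 else 0) else 1 := by
  haveI : NeZero p := ⟨(Fact.out : p.Prime).ne_zero⟩
  by_cases hD : D = 0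
  · subst hD
    by_cases hC : C = 0
    · subst hC
      rw [if_pos rfl, if_pos rfl]
      have hfe : (Finset.univ.filter fun B : ZMod p => (!![B, 0; 0, 0]).rank = 1)
          = Finset.univ.filter fun B : ZMod p => B ≠ 0 := by
        apply Finset.filter_congr
        intro B _
        rw [rank_fin_two_eq_one_iff]
        simp
      rw [hfe, Finset.filter_ne', Finset.card_erase_of_mem (Finset.mem_univ 0),
        Finset.card_univ, ZMod.card]
      have hp1 : 1 ≤ p := (Fact.out : p.Prime).one_le
      push_cast [Nat.cast_sub hp1]
      ring
    · rw [if_pos rfl, if_neg hC]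
      have hfe : (Finset.univ.filter fun B : ZMod p => (!![B, C; C, 0]).rank = 1) = ∅ := by
        rw [Finset.filter_eq_empty_iff]
        intro B _
        rw [rank_fin_two_eq_one_iff]
        rintro ⟨hdet, -⟩
        rw [mul_zero, zero_sub, neg_eq_zero, mul_self_eq_zero] at hdet
        exact hC hdet
      rw [hfe]
      simp
  · rw [if_neg hD]
    have hfe : (Finset.univ.filter fun B : ZMod p => (!![B, C; C, D]).rank = 1)
        = {C * C / D} := by
      ext B
      rw [Finset.mem_filter, Finset.mem_singleton, rank_fin_two_eq_one_iff]
      constructor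
      · rintro ⟨-, hdet, -⟩
        rw [sub_eq_zero] at hdet
        field_simp
        linear_combination hdet
      · rintro rfl
        refine ⟨Finset.mem_univ _, by field_simp; ring, ?_⟩
        rintro ⟨-, -, -, h4⟩
        exact hD h4
    rw [hfe, Finset.card_singleton]
    norm_num

lemma card_rank_two (C D : ZMod p) :
    ((Finset.univ.filter fun B : ZMod p => (!![B, C; C, D]).rank = 2).card : ℝ)
      = if D = 0 then (if C = 0 then 0 else (p : ℝ)) else (p : ℝ) - 1 := by
  haveI : NeZero p := ⟨(Fact.out : p.Prime).ne_zero⟩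
  by_cases hD : D = 0
  · subst hD
    by_cases hC : C = 0
    · subst hC
      rw [if_pos rfl, if_pos rfl]
      have hfe : (Finset.univ.filter fun B : ZMod p => (!![B, 0; 0, 0]).rank = 2) = ∅ := by
        rw [Finset.filter_eq_empty_iff]
        intro B _
        rw [rank_fin_two_eq_two_iff]
        simp
      rw [hfe]
      simp
    · rw [if_pos rfl, if_neg hC]
      have hfe : (Finset.univ.filter fun B : ZMod p => (!![B, C; C, 0]).rank = 2)
          = Finset.univ := by
        rw [Finset.filter_eq_self]
        intro B _
        rw [rank_fin_two_eq_two_iff]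
        rw [mul_zero, zero_sub, neg_ne_zero]
        exact mul_self_ne_zero.mpr hC
      rw [hfe, Finset.card_univ, ZMod.card]
  · rw [if_neg hD]
    have hfe : (Finset.univ.filter fun B : ZMod p => (!![B, C; C, D]).rank = 2)
        = Finset.univ.erase (C * C / D) := by
      ext B
      rw [Finset.mem_filter, Finset.mem_erase, rank_fin_two_eq_two_iff]
      constructor
      · rintro ⟨-, hdet⟩
        refine ⟨?_, Finset.mem_univ _⟩
        rintro rfl
        apply hdet
        field_simp
        ring
      · rintro ⟨hne, -⟩
        refine ⟨Finset.mem_univ _, ?_⟩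
        intro hdet
        apply hne
        rw [sub_eq_zero] at hdet
        field_simp
        linear_combination hdet
    rw [hfe, Finset.card_erase_of_mem (Finset.mem_univ _), Finset.card_univ, ZMod.card]
    have hp1 : 1 ≤ p := (Fact.out : p.Prime).one_le
    push_cast [Nat.cast_sub hp1]
    ring

end CountAux

section SumAux

variable {p : ℕ} [Fact p.Prime]

lemma zmod_cast_val (C : ZMod p) : ((C.val : ℕ) : ZMod p) = C := by
  haveI : NeZero p := ⟨(Fact.out : p.Prime).ne_zero⟩
  exact ZMod.natCast_rightInverse C

lemma sum_range_zmod (f : ℕ → ℝ) :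
    ∑ n ∈ Finset.range p, f n = ∑ C : ZMod p, f C.val := by
  haveI : NeZero p := ⟨(Fact.out : p.Prime).ne_zero⟩
  refine Finset.sum_nbij' (i := fun n => (n : ZMod p)) (j := fun C => C.val)
    (fun a ha => Finset.mem_univ _) (fun b _ => Finset.mem_range.mpr (ZMod.val_lt b))
    (fun a ha => ZMod.val_cast_of_lt (Finset.mem_range.mp ha))
    (fun b _ => ZMod.natCast_rightInverse b) ?_
  intro a ha
  rw [ZMod.val_cast_of_lt (Finset.mem_range.mp ha)]

lemma lam_sum (i : ℕ) (f g : ℕ → ℝ) :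
    ∑ t ∈ Lam p i, f t.2.1 * g t.2.2
      = ∑ C : ZMod p, ∑ D : ZMod p,
          ((Finset.univ.filter fun B : ZMod p => (!![B, C; C, D]).rank = i).card : ℝ)
            * (f C.val * g D.val) := by
  haveI : NeZero p := ⟨(Fact.out : p.Prime).ne_zero⟩
  rw [Lam, Finset.sum_filter, Finset.sum_product]
  simp_rw [Finset.sum_product]
  rw [Finset.sum_comm]
  have hstep : ∀ c ∈ Finset.range p,
      (∑ b ∈ Finset.range p, ∑ d ∈ Finset.range p,
        if Matrix.rank !![((b : ℕ) : ZMod p), ((c : ℕ) : ZMod p);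
            ((c : ℕ) : ZMod p), ((d : ℕ) : ZMod p)] = i
        then f (b, c, d).2.1 * g (b, c, d).2.2 else 0)
      = ∑ d ∈ Finset.range p, ∑ b ∈ Finset.range p,
        if Matrix.rank !![((b : ℕ) : ZMod p), ((c : ℕ) : ZMod p);
            ((c : ℕ) : ZMod p), ((d : ℕ) : ZMod p)] = i
        then f c * g d else 0 := by
    intro c _
    rw [Finset.sum_comm]
  rw [Finset.sum_congr rfl hstep]
  rw [sum_range_zmod]
  congr 1
  funext C
  rw [zmod_cast_val C]
  rw [sum_range_zmod]
  congr 1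
  funext D
  rw [zmod_cast_val D]
  rw [sum_range_zmod]
  simp_rw [zmod_cast_val]
  rw [← Finset.sum_filter, Finset.sum_const, nsmul_eq_mul]

end SumAux

theorem stmt15 (p : ℕ) [Fact p.Prime] (x y : ℚ_[p]) :
    (∑ t ∈ Lam p 1,
        pind (x + (p : ℚ_[p])⁻¹ * (t.2.1 : ℚ_[p]))
          * pind (y + (p : ℚ_[p])⁻¹ * (t.2.2 : ℚ_[p]))
      = ((p : ℝ) - 1) * pind x * pind y
          + pind ((p : ℚ_[p]) * x) * pind ((p : ℚ_[p]) * y)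
          - pind ((p : ℚ_[p]) * x) * pind y) ∧
    (∑ t ∈ Lam p 2,
        pind (x + (p : ℚ_[p])⁻¹ * (t.2.1 : ℚ_[p]))
          * pind (y + (p : ℚ_[p])⁻¹ * (t.2.2 : ℚ_[p]))
      = ((p : ℝ) - 1) * pind ((p : ℚ_[p]) * x) * pind ((p : ℚ_[p]) * y)
          + pind ((p : ℚ_[p]) * x) * pind y
          - (p : ℝ) * pind x * pind y) := by
  haveI : NeZero p := ⟨(Fact.out : p.Prime).ne_zero⟩
  set F : ZMod p → ℝ := fun C => pind (x + (p : ℚ_[p])⁻¹ * ((C.val : ℕ) : ℚ_[p])) with hF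
  set G : ZMod p → ℝ := fun D => pind (y + (p : ℚ_[p])⁻¹ * ((D.val : ℕ) : ℚ_[p])) with hG
  set A : ℝ := pind x
  set A' : ℝ := pind ((p : ℚ_[p]) * x)
  set B : ℝ := pind y
  set B' : ℝ := pind ((p : ℚ_[p]) * y)
  have hFsum : ∑ C : ZMod p, F C = A' := sum_pind x
  have hGsum : ∑ D : ZMod p, G D = B' := sum_pind y
  have hF0 : F 0 = A := pind_zero_term x
  have hG0 : G 0 = B := pind_zero_term y
  have hGe : ∑ D ∈ Finset.univ.erase (0 : ZMod p), G D = B' - B := by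
    have h := Finset.sum_erase_add Finset.univ G (Finset.mem_univ (0 : ZMod p))
    rw [hGsum, hG0] at h
    linarith
  constructor
  · rw [lam_sum 1 (fun n => pind (x + (p : ℚ_[p])⁻¹ * (n : ℚ_[p])))
      (fun n => pind (y + (p : ℚ_[p])⁻¹ * (n : ℚ_[p])))]
    have hinner : ∀ C : ZMod p,
        ∑ D : ZMod p,
          ((Finset.univ.filter fun B : ZMod p => (!![B, C; C, D]).rank = 1).card : ℝ)
            * (F C * G D)
        = F C * (B' - B) + (if C = 0 then (p : ℝ) - 1 else 0) * (F C * B) := by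
      intro C
      simp_rw [card_rank_one]
      rw [← Finset.sum_erase_add _ _ (Finset.mem_univ (0 : ZMod p))]
      have h1 : ∀ D ∈ Finset.univ.erase (0 : ZMod p),
          (if D = 0 then (if C = 0 then (p : ℝ) - 1 else 0) else 1) * (F C * G D)
            = F C * G D := by
        intro D hD
        rw [if_neg (Finset.mem_erase.mp hD).1, one_mul]
      rw [Finset.sum_congr rfl h1, ← Finset.mul_sum, hGe, if_pos rfl, hG0]
    rw [Finset.sum_congr rfl (fun C _ => hinner C), Finset.sum_add_distrib,
      ← Finset.sum_mul, hFsum]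
    have h2 : ∀ C : ZMod p,
        (if C = 0 then (p : ℝ) - 1 else 0) * (F C * B)
          = if C = 0 then ((p : ℝ) - 1) * (F C * B) else 0 := by
      intro C; split_ifs <;> ring
    rw [Finset.sum_congr rfl (fun C _ => h2 C),
      Finset.sum_ite_eq' Finset.univ (0 : ZMod p) (fun C => ((p : ℝ) - 1) * (F C * B)),
      if_pos (Finset.mem_univ _), hF0]
    ring
  · rw [lam_sum 2 (fun n => pind (x + (p : ℚ_[p])⁻¹ * (n : ℚ_[p])))
      (fun n => pind (y + (p : ℚ_[p])⁻¹ * (n : ℚ_[p])))]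
    have hinner : ∀ C : ZMod p,
        ∑ D : ZMod p,
          ((Finset.univ.filter fun B : ZMod p => (!![B, C; C, D]).rank = 2).card : ℝ)
            * (F C * G D)
        = ((p : ℝ) - 1) * (F C * (B' - B)) + (if C = 0 then 0 else (p : ℝ)) * (F C * B) := by
      intro C
      simp_rw [card_rank_two]
      rw [← Finset.sum_erase_add _ _ (Finset.mem_univ (0 : ZMod p))]
      have h1 : ∀ D ∈ Finset.univ.erase (0 : ZMod p),
          (if D = 0 then (if C = 0 then 0 else (p : ℝ)) else (p : ℝ) - 1) * (F C * G D)
            = ((p : ℝ) - 1) * (F C * G D) := by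
        intro D hD
        rw [if_neg (Finset.mem_erase.mp hD).1]
      rw [Finset.sum_congr rfl h1, if_pos rfl, hG0]
      have : ∑ D ∈ Finset.univ.erase (0 : ZMod p), ((p : ℝ) - 1) * (F C * G D)
          = ((p : ℝ) - 1) * (F C * (B' - B)) := by
        rw [← Finset.mul_sum]
        congr 1
        rw [← Finset.mul_sum, hGe]
      rw [this]
    rw [Finset.sum_congr rfl (fun C _ => hinner C), Finset.sum_add_distrib]
    have hterm1 : ∑ C : ZMod p, ((p : ℝ) - 1) * (F C * (B' - B))
        = ((p : ℝ) - 1) * (A' * (B' - B)) := by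
      rw [← Finset.mul_sum]
      congr 1
      rw [← Finset.sum_mul, hFsum]
    have hterm2 : ∑ C : ZMod p, (if C = 0 then 0 else (p : ℝ)) * (F C * B)
        = (p : ℝ) * (A' * B) - (p : ℝ) * (A * B) := by
      have h3 : ∀ C : ZMod p,
          (if C = 0 then 0 else (p : ℝ)) * (F C * B)
            = (p : ℝ) * (F C * B) - (if C = 0 then (p : ℝ) * (F C * B) else 0) := by
        intro C; split_ifs <;> ring
      rw [Finset.sum_congr rfl (fun C _ => h3 C), Finset.sum_sub_distrib,
        Finset.sum_ite_eq' Finset.univ (0 : ZMod p) (fun C => (p : ℝ) * (F C * B)),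
        if_pos (Finset.mem_univ _), hF0, ← Finset.mul_sum, ← Finset.sum_mul, hFsum]
    rw [hterm1, hterm2]
    ring
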